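/- There exist infinitely many positive 6-aperiodic words over the alphabet {a, b}; in fact, the number f(n) of positive 6-aperiodic words of length n over {a,b} that start and end with b grows exponentially in n (in particular, f(n) ≥ n for all sufficiently large n). -/

import Mathlib

/-- A word over the alphabet `{a, b}` (encoded as `List Bool`, with `b = true`) is
6-aperiodic if it contains no non-empty subword of the form `v⁶`. -/
def SixAperiodic (w : List Bool) : Prop :=
  ∀ v : List Bool, v ≠ [] → ¬ ((v ++ v ++ v ++ v ++ v ++ v) <:+: w)

lemma SixAperiodic.of_infix {w u : List Bool} (h : SixAperiodic w) (hu : u <:+: w) :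
    SixAperiodic u := fun v hv hvu => h v hv (hvu.trans hu)

lemma short_aperiodic {w : List Bool} (h : w.length ≤ 5) : SixAperiodic w := by
  intro v hv hinf
  have h1 : 1 ≤ v.length := List.length_pos_iff.mpr hv
  have := hinf.length_le
  simp only [List.length_append] at this
  omega

lemma sixpow_suffix {w v : List Bool} {x : Bool} (hw : SixAperiodic w) (hv : v ≠ [])
    (h : (v ++ v ++ v ++ v ++ v ++ v) <:+: w ++ [x]) :
    ∃ u, w ++ [x] = u ++ (v ++ v ++ v ++ v ++ v ++ v) := by
  obtain ⟨s, t, hst⟩ := h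
  rcases t.eq_nil_or_concat with rfl | ⟨t', y, rfl⟩
  · exact ⟨s, by simpa using hst.symm⟩
  · exfalso
    apply hw v hv
    have hst' : (s ++ (v ++ v ++ v ++ v ++ v ++ v) ++ t') ++ [y] = w ++ [x] := by
      simpa [List.append_assoc] using hst
    have := (List.append_inj' hst' rfl).1
    exact ⟨s, t', this⟩

def rep5 (v : List Bool) : List Bool := v ++ v ++ v ++ v ++ v

def Fmap (p : ℕ) (z : List Bool) : List Bool := z ++ rep5 (z.drop (z.length - p))

open scoped Classical in
noncomputable def allW (n : ℕ) : Finset (List Bool) :=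
  (Finset.univ : Finset (Fin n → Bool)).image List.ofFn

lemma mem_allW {n : ℕ} {w : List Bool} : w ∈ allW n ↔ w.length = n := by
  constructor
  · rintro h
    simp only [allW, Finset.mem_image] at h
    obtain ⟨f, -, rfl⟩ := h
    simp
  · rintro rfl
    simp only [allW, Finset.mem_image]
    exact ⟨fun i => w.get i, Finset.mem_univ _, List.ofFn_get w⟩

open scoped Classical in
noncomputable def Ap (n : ℕ) : Finset (List Bool) :=
  (allW n).filter (fun w => SixAperiodic w ∧ w.head? = some true)

lemma mem_Ap {n : ℕ} {w : List Bool} :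
    w ∈ Ap n ↔ w.length = n ∧ SixAperiodic w ∧ w.head? = some true := by
  classical
  simp [Ap, mem_allW]

lemma key_step {n : ℕ} (hn : 1 ≤ n) {w : List Bool} (hw : w ∈ Ap n) (x : Bool) :
    w ++ [x] ∈ Ap (n+1) ∨
    ∃ p ∈ Finset.Icc 1 ((n+1)/6), w ++ [x] ∈ (Ap (n+1-5*p)).image (Fmap p) := by
  rw [mem_Ap] at hw
  obtain ⟨hlen, hap, hhead⟩ := hw
  have hwne : w ≠ [] := by intro h; rw [h] at hlen; simp at hlen; omega
  by_cases hap' : SixAperiodic (w ++ [x])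
  · left
    rw [mem_Ap]
    refine ⟨by simp [hlen], hap', ?_⟩
    rw [List.head?_append_of_ne_nil _ hwne]; exact hhead
  · right
    simp only [SixAperiodic, not_forall] at hap'
    obtain ⟨v, hv, hinf⟩ := hap'
    rw [not_not] at hinf
    obtain ⟨u, hu⟩ := sixpow_suffix hap hv hinf
    set p := v.length with hp
    have hp1 : 1 ≤ p := List.length_pos_iff.mpr hv
    have hlen' : n + 1 = u.length + 6 * p := by
      have := congrArg List.length hu
      simp [hlen] at this
      omega
    refine ⟨p, ?_, ?_⟩
    · rw [Finset.mem_Icc]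
      exact ⟨hp1, Nat.le_div_iff_mul_le (by norm_num) |>.mpr (by omega)⟩
    · rw [Finset.mem_image]
      refine ⟨u ++ v, ?_, ?_⟩
      · rw [mem_Ap]
        have hzlen : (u ++ v).length = n + 1 - 5 * p := by simp; omega
        have hzpre : (u ++ v) <+: w := by
          have h1 : (u ++ v) <+: w ++ [x] := by
            refine ⟨v ++ v ++ v ++ v ++ v, ?_⟩
            rw [hu]; simp [List.append_assoc]
          rcases (List.prefix_concat_iff.mp h1) with h | h
          · exfalso
            have := congrArg List.length h
            simp at this
            omega
          · exact h
        refine ⟨hzlen, hap.of_infix hzpre.isInfix, ?_⟩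
        obtain ⟨r, hr⟩ := hzpre
        have hne : u ++ v ≠ [] := by simp [hv]
        rw [← hr, List.head?_append_of_ne_nil _ hne] at hhead
        exact hhead
      · show Fmap p (u ++ v) = w ++ [x]
        rw [Fmap]
        have hdrop : (u ++ v).drop ((u ++ v).length - p) = v := by
          simp [List.length_append, hp]
        rw [hdrop, hu, rep5]
        simp [List.append_assoc]

open scoped Classical in
noncomputable def Apb (n : ℕ) : Finset (List Bool) :=
  (Ap n).filter (fun w => w.getLast? = some true)

lemma concat_inj : Function.Injective (fun q : List Bool × Bool => q.1 ++ [q.2]) := by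
  rintro ⟨w1, x1⟩ ⟨w2, x2⟩ h
  simp only at h
  obtain ⟨h1, h2⟩ := List.append_inj' h rfl
  simp only [List.cons.injEq] at h2
  simp [h1, h2.1]

lemma R1 {n : ℕ} (hn : 1 ≤ n) :
    2 * (Ap n).card ≤
      (Ap (n+1)).card + ∑ p ∈ Finset.Icc 1 ((n+1)/6), (Ap (n+1-5*p)).card := by
  classical
  set E := ((Ap n) ×ˢ (Finset.univ : Finset Bool)).image
      (fun q : List Bool × Bool => q.1 ++ [q.2]) with hE
  have hcard : E.card = 2 * (Ap n).card := by
    rw [hE, Finset.card_image_of_injective _ concat_inj, Finset.card_product]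
    simp [Finset.card_univ, mul_comm]
  have hsub : E ⊆ Ap (n+1) ∪ (Finset.Icc 1 ((n+1)/6)).biUnion
      (fun p => (Ap (n+1-5*p)).image (Fmap p)) := by
    intro w' hw'
    rw [hE, Finset.mem_image] at hw'
    obtain ⟨⟨w, x⟩, hq, rfl⟩ := hw'
    rw [Finset.mem_product] at hq
    rcases key_step hn hq.1 x with h | ⟨p, hp, h⟩
    · exact Finset.mem_union_left _ h
    · exact Finset.mem_union_right _ (Finset.mem_biUnion.mpr ⟨p, hp, h⟩)
  have hbu : ((Finset.Icc 1 ((n+1)/6)).biUnion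
      (fun p => (Ap (n+1-5*p)).image (Fmap p))).card ≤
      ∑ p ∈ Finset.Icc 1 ((n+1)/6), (Ap (n+1-5*p)).card :=
    (Finset.card_biUnion_le).trans (Finset.sum_le_sum fun p _ => Finset.card_image_le)
  calc 2 * (Ap n).card = E.card := hcard.symm
    _ ≤ _ := (Finset.card_le_card hsub).trans <|
        (Finset.card_union_le _ _).trans (by omega)

lemma R2 {n : ℕ} (hn : 1 ≤ n) :
    (Ap n).card ≤
      (Apb (n+1)).card + ∑ p ∈ Finset.Icc 1 ((n+1)/6), (Ap (n+1-5*p)).card := by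
  classical
  set E := (Ap n).image (fun w => w ++ [true]) with hE
  have hcard : E.card = (Ap n).card := by
    rw [hE]
    apply Finset.card_image_of_injective
    intro w1 w2 h
    exact (List.append_inj' h rfl).1
  have hsub : E ⊆ Apb (n+1) ∪ (Finset.Icc 1 ((n+1)/6)).biUnion
      (fun p => (Ap (n+1-5*p)).image (Fmap p)) := by
    intro w' hw'
    rw [hE, Finset.mem_image] at hw'
    obtain ⟨w, hq, rfl⟩ := hw'
    rcases key_step hn hq true with h | ⟨p, hp, h⟩
    · apply Finset.mem_union_left
      rw [Apb, Finset.mem_filter]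
      exact ⟨h, by simp⟩
    · exact Finset.mem_union_right _ (Finset.mem_biUnion.mpr ⟨p, hp, h⟩)
  have hbu : ((Finset.Icc 1 ((n+1)/6)).biUnion
      (fun p => (Ap (n+1-5*p)).image (Fmap p))).card ≤
      ∑ p ∈ Finset.Icc 1 ((n+1)/6), (Ap (n+1-5*p)).card :=
    (Finset.card_biUnion_le).trans (Finset.sum_le_sum fun p _ => Finset.card_image_le)
  calc (Ap n).card = E.card := hcard.symm
    _ ≤ _ := (Finset.card_le_card hsub).trans <|
        (Finset.card_union_le _ _).trans (by omega)

noncomputable def t (n : ℕ) : ℝ := ((Ap n).card : ℝ)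

lemma t_nonneg (n : ℕ) : 0 ≤ t n := Nat.cast_nonneg _

lemma Ap_one : Ap 1 = {[true]} := by
  ext w
  rw [mem_Ap, Finset.mem_singleton]
  constructor
  · rintro ⟨h1, -, h3⟩
    obtain ⟨a, rfl⟩ := List.length_eq_one_iff.mp h1
    simp only [List.head?_cons, Option.some.injEq] at h3
    rw [h3]
  · rintro rfl
    exact ⟨rfl, short_aperiodic (by norm_num), rfl⟩

lemma t_one : t 1 = 1 := by rw [t, Ap_one]; simp

lemma sum_pow_bound (M : ℕ) :
    ∑ p ∈ Finset.Icc 1 M, ((2:ℝ)/3)^(5*p-1) ≤ 48/211 := by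
  have key : ∑ p ∈ Finset.Icc 1 M, ((2:ℝ)/3)^(5*p-1)
      = (3/2) * ∑ p ∈ Finset.Icc 1 M, ((32:ℝ)/243)^p := by
    rw [Finset.mul_sum]
    apply Finset.sum_congr rfl
    intro p hp
    rw [Finset.mem_Icc] at hp
    have h5 : 5*p-1+1 = 5*p := by omega
    have : ((2:ℝ)/3)^(5*p) = ((32:ℝ)/243)^p := by
      rw [pow_mul]; norm_num
    calc ((2:ℝ)/3)^(5*p-1) = (3/2) * ((2/3) * (2/3)^(5*p-1)) := by ring
      _ = (3/2) * (2/3)^(5*p) := by rw [← pow_succ', h5]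
      _ = (3/2) * ((32:ℝ)/243)^p := by rw [this]
  rw [key]
  have hr0 : (0:ℝ) ≤ 32/243 := by norm_num
  have hr1 : (32:ℝ)/243 < 1 := by norm_num
  have hs : HasSum (fun i : ℕ => (32:ℝ)/243 * (32/243)^i) ((32/243) * (1 - 32/243)⁻¹) :=
    (hasSum_geometric_of_lt_one hr0 hr1).mul_left _
  have hle : ∑ p ∈ Finset.Icc 1 M, ((32:ℝ)/243)^p ≤ (32/243) * (1 - 32/243)⁻¹ := by
    rw [← Finset.Ico_add_one_right_eq_Icc, Finset.sum_Ico_eq_sum_range]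
    have : ∀ i ∈ Finset.range (M + 1 - 1), ((32:ℝ)/243)^(1+i) = (32:ℝ)/243 * (32/243)^i := by
      intro i _; rw [pow_add, pow_one]
    rw [Finset.sum_congr rfl this]
    exact sum_le_hasSum _ (fun i _ => by positivity) hs
  calc (3:ℝ)/2 * ∑ p ∈ Finset.Icc 1 M, ((32:ℝ)/243)^p
      ≤ (3/2) * ((32/243) * (1 - 32/243)⁻¹) := by
        apply mul_le_mul_of_nonneg_left hle (by norm_num)
    _ ≤ 48/211 := by norm_num

lemma growth : ∀ n, 1 ≤ n → 3/2 * t n ≤ t (n+1) := by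
  intro n
  induction n using Nat.strong_induction_on with
  | _ n IH =>
    intro hn
    have chain : ∀ m j, 1 ≤ m → m + j ≤ n → (3/2:ℝ)^j * t m ≤ t (m+j) := by
      intro m j hm
      induction j with
      | zero => intro _; simp
      | succ j ih =>
        intro hmj
        have h1 : (3/2:ℝ)^j * t m ≤ t (m+j) := ih (by omega)
        have h2 : 3/2 * t (m+j) ≤ t (m+j+1) := IH (m+j) (by omega) (by omega)
        calc (3/2:ℝ)^(j+1) * t m = (3/2) * ((3/2)^j * t m) := by ring
          _ ≤ (3/2) * t (m+j) := by linarith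
          _ ≤ t (m+j+1) := h2
    have hterm : ∀ p ∈ Finset.Icc 1 ((n+1)/6), t (n+1-5*p) ≤ (2/3:ℝ)^(5*p-1) * t n := by
      intro p hp
      rw [Finset.mem_Icc] at hp
      have h6 : p * 6 ≤ n + 1 := (Nat.le_div_iff_mul_le (by norm_num)).mp hp.2
      have hp1 := hp.1
      set m := n + 1 - 5*p with hm
      have hm1 : 1 ≤ m := by omega
      have hmn : m + (5*p-1) = n := by omega
      have hch := chain m (5*p-1) hm1 (by omega)
      rw [hmn] at hch
      have h23 : ((2:ℝ)/3)^(5*p-1) = (((3:ℝ)/2)^(5*p-1))⁻¹ := by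
        rw [← inv_pow]; norm_num
      have hpow : (0:ℝ) < (3/2)^(5*p-1) := by positivity
      calc t m = ((3/2:ℝ)^(5*p-1))⁻¹ * ((3/2)^(5*p-1) * t m) := by
            field_simp
        _ ≤ ((3/2:ℝ)^(5*p-1))⁻¹ * t n := by
            apply mul_le_mul_of_nonneg_left hch (by positivity)
        _ = (2/3:ℝ)^(5*p-1) * t n := by rw [h23]
    have hsum : ∑ p ∈ Finset.Icc 1 ((n+1)/6), t (n+1-5*p) ≤ (48/211) * t n := by
      calc ∑ p ∈ Finset.Icc 1 ((n+1)/6), t (n+1-5*p)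
          ≤ ∑ p ∈ Finset.Icc 1 ((n+1)/6), (2/3:ℝ)^(5*p-1) * t n := Finset.sum_le_sum hterm
        _ = (∑ p ∈ Finset.Icc 1 ((n+1)/6), (2/3:ℝ)^(5*p-1)) * t n := by
            rw [Finset.sum_mul]
        _ ≤ 48/211 * t n := mul_le_mul_of_nonneg_right (sum_pow_bound _) (t_nonneg n)
    have hR1 : 2 * t n ≤ t (n+1) + ∑ p ∈ Finset.Icc 1 ((n+1)/6), t (n+1-5*p) := by
      have h := R1 hn
      have : ((2 * (Ap n).card : ℕ) : ℝ)
          ≤ (((Ap (n+1)).card + ∑ p ∈ Finset.Icc 1 ((n+1)/6), (Ap (n+1-5*p)).card : ℕ) : ℝ) :=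
        Nat.cast_le.mpr h
      push_cast at this
      simpa [t] using this
    have h0 := t_nonneg n
    linarith

lemma t_lower : ∀ n, 1 ≤ n → ((3:ℝ)/2)^(n-1) ≤ t n := by
  intro n hn
  induction n with
  | zero => omega
  | succ n ih =>
    rcases Nat.eq_or_lt_of_le hn with h | h
    · simp [← h, t_one]
    · have hn1 : 1 ≤ n := by omega
      have h1 := ih hn1
      have h2 := growth n hn1
      have : ((3:ℝ)/2)^(n+1-1) = (3/2) * (3/2)^(n-1) := by
        rw [Nat.add_sub_cancel, ← pow_succ']
        congr 1
        omega
      rw [this]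
      calc (3/2:ℝ) * (3/2)^(n-1) ≤ 3/2 * t n := by
            apply mul_le_mul_of_nonneg_left h1 (by norm_num)
        _ ≤ t (n+1) := h2

lemma chain_global : ∀ m j, 1 ≤ m → (3/2:ℝ)^j * t m ≤ t (m+j) := by
  intro m j hm
  induction j with
  | zero => simp
  | succ j ih =>
    have h2 := growth (m+j) (by omega)
    calc (3/2:ℝ)^(j+1) * t m = (3/2) * ((3/2)^j * t m) := by ring
      _ ≤ (3/2) * t (m+j) := by linarith
      _ ≤ t (m+j+1) := h2

lemma hsum_global (n : ℕ) (hn : 1 ≤ n) :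
    ∑ p ∈ Finset.Icc 1 ((n+1)/6), t (n+1-5*p) ≤ (48/211) * t n := by
  have hterm : ∀ p ∈ Finset.Icc 1 ((n+1)/6), t (n+1-5*p) ≤ (2/3:ℝ)^(5*p-1) * t n := by
    intro p hp
    rw [Finset.mem_Icc] at hp
    have h6 : p * 6 ≤ n + 1 := (Nat.le_div_iff_mul_le (by norm_num)).mp hp.2
    have hp1 := hp.1
    set m := n + 1 - 5*p with hm
    have hm1 : 1 ≤ m := by omega
    have hmn : m + (5*p-1) = n := by omega
    have hch := chain_global m (5*p-1) hm1
    rw [hmn] at hch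
    have h23 : ((2:ℝ)/3)^(5*p-1) = (((3:ℝ)/2)^(5*p-1))⁻¹ := by
      rw [← inv_pow]; norm_num
    calc t m = ((3/2:ℝ)^(5*p-1))⁻¹ * ((3/2)^(5*p-1) * t m) := by
          field_simp
      _ ≤ ((3/2:ℝ)^(5*p-1))⁻¹ * t n := by
          apply mul_le_mul_of_nonneg_left hch (by positivity)
      _ = (2/3:ℝ)^(5*p-1) * t n := by rw [h23]
  calc ∑ p ∈ Finset.Icc 1 ((n+1)/6), t (n+1-5*p)
      ≤ ∑ p ∈ Finset.Icc 1 ((n+1)/6), (2/3:ℝ)^(5*p-1) * t n := Finset.sum_le_sum hterm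
    _ = (∑ p ∈ Finset.Icc 1 ((n+1)/6), (2/3:ℝ)^(5*p-1)) * t n := by rw [Finset.sum_mul]
    _ ≤ 48/211 * t n := mul_le_mul_of_nonneg_right (sum_pow_bound _) (t_nonneg n)

lemma Apb_lb (n : ℕ) (hn : 1 ≤ n) :
    (163/211) * ((3:ℝ)/2)^(n-1) ≤ ((Apb (n+1)).card : ℝ) := by
  have hR2 : t n ≤ ((Apb (n+1)).card : ℝ)
      + ∑ p ∈ Finset.Icc 1 ((n+1)/6), t (n+1-5*p) := by
    have h := R2 hn
    have : (((Ap n).card : ℕ) : ℝ)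
        ≤ (((Apb (n+1)).card + ∑ p ∈ Finset.Icc 1 ((n+1)/6), (Ap (n+1-5*p)).card : ℕ) : ℝ) :=
      Nat.cast_le.mpr h
    push_cast at this
    simpa [t] using this
  have hs := hsum_global n hn
  have hl := t_lower n hn
  have h0 : (0:ℝ) ≤ ((3:ℝ)/2)^(n-1) := by positivity
  nlinarith [t_nonneg n]

/-- The number of (positive) 6-aperiodic words of length `n` over `{a, b}` that start and
end with `b`. -/
noncomputable def fcount (n : ℕ) : ℕ :=
  Set.ncard {w : List Bool |
    w.length = n ∧ SixAperiodic w ∧ w.head? = some true ∧ w.getLast? = some true}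

lemma fcount_eq (n : ℕ) : fcount n = (Apb n).card := by
  classical
  rw [fcount, ← Set.ncard_coe_finset]
  congr 1
  ext w
  simp [Apb, mem_Ap, and_assoc]

lemma fcount_lb (m : ℕ) (hm : 2 ≤ m) :
    (163/211) * ((3:ℝ)/2)^(m-2) ≤ (fcount m : ℝ) := by
  obtain ⟨k, rfl⟩ : ∃ k, m = k + 2 := ⟨m - 2, by omega⟩
  rw [fcount_eq]
  have := Apb_lb (k+1) (by omega)
  simpa using this

open Filter in
lemma pow_le_fcount : ∃ N : ℕ, ∀ n ≥ N, ((7:ℝ)/5) ^ n ≤ (fcount n : ℝ) := by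
  have h1 : Tendsto (fun m : ℕ => ((14:ℝ)/15)^m) atTop (nhds 0) :=
    tendsto_pow_atTop_nhds_zero_of_lt_one (by norm_num) (by norm_num)
  have h2 : ∀ᶠ m in atTop, ((14:ℝ)/15)^m ≤ 652/1899 :=
    h1.eventually_le_const (by norm_num)
  obtain ⟨N1, hN1⟩ := eventually_atTop.mp h2
  refine ⟨max N1 2, fun n hn => ?_⟩
  have hn2 : 2 ≤ n := le_trans (le_max_right _ _) hn
  have hn1 : N1 ≤ n := le_trans (le_max_left _ _) hn
  have e1 : ((7:ℝ)/5)^n = (14/15)^n * (3/2)^n := by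
    rw [← mul_pow]; norm_num
  have e2 : ((3:ℝ)/2)^(n-2) * (3/2)^2 = (3/2)^n := by
    rw [← pow_add]; congr 1; omega
  have e3 : (652:ℝ)/1899 * (3/2)^n = 163/211 * (3/2)^(n-2) := by
    rw [← e2]; ring
  have h4 : (0:ℝ) ≤ (3/2:ℝ)^n := by positivity
  calc ((7:ℝ)/5)^n = (14/15)^n * (3/2)^n := e1
    _ ≤ (652/1899) * (3/2)^n := mul_le_mul_of_nonneg_right (hN1 n hn1) h4
    _ = 163/211 * (3/2)^(n-2) := e3
    _ ≤ (fcount n : ℝ) := fcount_lb n hn2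

open Filter in
lemma nat_le_fcount : ∃ N : ℕ, ∀ n ≥ N, n ≤ fcount n := by
  obtain ⟨N, hN⟩ := pow_le_fcount
  have hs : Summable (fun n : ℕ => (n:ℝ)^1 * (5/7)^n) :=
    summable_pow_mul_geometric_of_norm_lt_one 1 (by rw [Real.norm_eq_abs, abs_of_nonneg (by norm_num : (0:ℝ) ≤ 5/7)]; norm_num)
  have ht : Tendsto (fun n : ℕ => (n:ℝ)^1 * (5/7)^n) atTop (nhds 0) := hs.tendsto_atTop_zero
  have h2 : ∀ᶠ n : ℕ in atTop, (n:ℝ)^1 * (5/7)^n ≤ 1 := ht.eventually_le_const (by norm_num)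
  obtain ⟨N2, hN2⟩ := eventually_atTop.mp h2
  refine ⟨max N N2, fun n hn => ?_⟩
  have hn1 : N ≤ n := le_trans (le_max_left _ _) hn
  have hn2 : N2 ≤ n := le_trans (le_max_right _ _) hn
  have key : (n:ℝ) ≤ ((7:ℝ)/5)^n := by
    have h3 := hN2 n hn2
    have e : (n:ℝ) = ((n:ℝ)^1 * (5/7)^n) * (7/5)^n := by
      rw [mul_assoc, ← mul_pow]
      norm_num
    rw [e]
    have h4 : (0:ℝ) ≤ (7/5:ℝ)^n := by positivity
    calc ((n:ℝ)^1 * (5/7)^n) * (7/5)^n ≤ 1 * (7/5)^n :=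
        mul_le_mul_of_nonneg_right h3 h4
      _ = (7/5:ℝ)^n := one_mul _
  have := le_trans key (hN n hn1)
  exact_mod_cast this

lemma aperiodic_infinite : {w : List Bool | SixAperiodic w}.Infinite := by
  obtain ⟨N, hN⟩ := nat_le_fcount
  intro h
  have hsub : Set.Ici (N+1) ⊆ List.length '' {w : List Bool | SixAperiodic w} := by
    intro n hn
    rw [Set.mem_Ici] at hn
    have h1 : 1 ≤ fcount n := le_trans (by omega) (hN n (by omega))
    have h2 : {w : List Bool |
        w.length = n ∧ SixAperiodic w ∧ w.head? = some true ∧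
          w.getLast? = some true}.Nonempty :=
      Set.nonempty_of_ncard_ne_zero (by rw [← fcount]; omega)
    obtain ⟨w, hw1, hw2, -, -⟩ := h2
    exact ⟨w, hw2, hw1⟩
  have hfin : (Set.Ici (N+1)).Finite := (h.image _).subset hsub
  exact Set.Ici_infinite _ hfin

/-- There are infinitely many positive 6-aperiodic words over `{a, b}`; in fact `fcount`
grows exponentially, and in particular `fcount n ≥ n` for all sufficiently large `n`. -/
theorem stmt15 :
    {w : List Bool | SixAperiodic w}.Infinite ∧
    (∃ c : ℝ, 1 < c ∧ ∃ N : ℕ, ∀ n ≥ N, c ^ n ≤ (fcount n : ℝ)) ∧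
    (∃ N : ℕ, ∀ n ≥ N, n ≤ fcount n) := by
  exact ⟨aperiodic_infinite, ⟨7/5, by norm_num, pow_le_fcount⟩, nat_le_fcount⟩
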